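/- Let σ be an n-well-centered n-simplex in ℝⁿ (n ≥ 1) with vertices v_0, …, v_n and facets F_i opposite v_i. Then the circumball of σ is contained in the union of σ with the equatorial balls of its facets: closedBall(c(σ), R(σ)) ⊆ convexHull({v_0, …, v_n}) ∪ ⋃_{i=0}^{n} closedBall(c(F_i), R(F_i)). -/

import Mathlib

open EuclideanGeometry RealInnerProductSpace

variable {E : Type*} [NormedAddCommGroup E] [InnerProductSpace ℝ E] [FiniteDimensional ℝ E]

/-- The facet of an `(n+1)`-simplex opposite vertex `i`. -/
noncomputable def Affine.Simplex.facetOpp {n : ℕ} (σ : Affine.Simplex ℝ E (n + 1))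
    (i : Fin (n + 2)) : Affine.Simplex ℝ E n :=
  σ.face (fs := {i}ᶜ)
    (by rw [Finset.card_compl, Finset.card_singleton, Fintype.card_fin]; rfl)

/-- A simplex is well-centered if its circumcenter is a positive affine
combination of its vertices, i.e. lies in the interior of the simplex. -/
def Affine.Simplex.WellCentered {n : ℕ} (σ : Affine.Simplex ℝ E n) : Prop :=
  ∃ w : Fin (n + 1) → ℝ, (∀ j, 0 < w j) ∧ (∑ j, w j = 1) ∧
    σ.circumcenter = Finset.univ.affineCombination ℝ σ.points w

/-- The signed distance from the circumcenter of `σ` to the hyperplane spanned by the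
facet opposite vertex `i`, positive when the circumcenter is on the same side as vertex `i`. -/
noncomputable def Affine.Simplex.signedDist {n : ℕ} (σ : Affine.Simplex ℝ E (n + 1))
    (i : Fin (n + 2)) : ℝ :=
  ⟪σ.circumcenter - ((σ.facetOpp i).circumcenter : E),
      σ.points i - (((σ.facetOpp i).orthogonalProjectionSpan (σ.points i) : E))⟫ /
    ‖σ.points i - (((σ.facetOpp i).orthogonalProjectionSpan (σ.points i) : E))‖

set_option maxHeartbeats 1000000 in
/-- The circumball of a well-centered `(n+1)`-simplex in `ℝⁿ⁺¹` is
contained in the union of the simplex with the equatorial balls of its facets. -/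
theorem circumball_subset_simplex_union_equatorial_balls {n : ℕ}
    (σ : Affine.Simplex ℝ (EuclideanSpace ℝ (Fin (n + 1))) (n + 1))
    (hσ : σ.WellCentered) :
    Metric.closedBall σ.circumcenter σ.circumradius ⊆
      convexHull ℝ (Set.range σ.points) ∪
        ⋃ i : Fin (n + 2),
          Metric.closedBall (σ.facetOpp i).circumcenter (σ.facetOpp i).circumradius := by
  classical
  obtain ⟨w, hw0, hw1, hwc⟩ := hσ
  set E' := EuclideanSpace ℝ (Fin (n + 1))
  have htop : affineSpan ℝ (Set.range σ.points) = ⊤ := by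
    rw [σ.independent.affineSpan_eq_top_iff_card_eq_finrank_add_one]
    simp [finrank_euclideanSpace]
  let b : AffineBasis (Fin (n + 2)) ℝ E' := ⟨σ.points, σ.independent, htop⟩
  have hb : ⇑b = σ.points := rfl
  intro x hx
  by_cases hmem : ∀ i, 0 ≤ b.coord i x
  · left
    have := b.affineCombination_coord_eq_self x
    rw [hb] at this
    rw [← this]
    exact affineCombination_mem_convexHull (fun i _ => hmem i)
      (b.sum_coord_apply_eq_one x)
  · right
    push_neg at hmem
    obtain ⟨i, hi⟩ := hmem
    refine Set.mem_iUnion.2 ⟨i, ?_⟩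
    -- notation
    set F := σ.facetOpp i with hFdef
    have hcard : ({i}ᶜ : Finset (Fin (n + 2))).card = n + 1 := by
      rw [Finset.card_compl, Finset.card_singleton, Fintype.card_fin]; rfl
    have hF : F = σ.face hcard := rfl
    set sp : AffineSubspace ℝ E' := affineSpan ℝ (Set.range F.points) with hspdef
    set cF : E' := F.circumcenter with hcF
    set c : E' := σ.circumcenter with hc
    have hrange : Set.range F.points = σ.points '' ↑({i}ᶜ : Finset (Fin (n + 2))) :=
      σ.range_face_points hcard
    have hcFmem : cF ∈ sp := F.circumcenter_mem_affineSpan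
    have hjmem : ∀ j : Fin (n + 2), j ≠ i → σ.points j ∈ sp := by
      intro j hj
      refine subset_affineSpan ℝ _ ?_
      rw [hrange]
      exact Set.mem_image_of_mem _ (by simp [hj])
    have hpi : σ.points i ∉ sp := by
      have h := σ.independent.notMem_affineSpan_diff i Set.univ
      intro hmem'
      apply h
      have : σ.points '' (↑({i}ᶜ : Finset (Fin (n + 2)))) ⊆
          σ.points '' (Set.univ \ {i}) := by
        apply Set.image_mono
        intro j hj
        simp only [Finset.coe_compl, Finset.coe_singleton, Set.mem_compl_iff,
          Set.mem_singleton_iff] at hj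
        exact ⟨trivial, hj⟩
      rw [hspdef, hrange] at hmem'
      exact affineSpan_mono ℝ this hmem'
    -- the normal vector
    set pp : E' := ↑(F.orthogonalProjectionSpan (σ.points i)) with hpp
    set v : E' := σ.points i - pp with hv
    have hppmem : pp ∈ sp := (F.orthogonalProjectionSpan (σ.points i)).2
    have hvmem : v ∈ sp.directionᗮ := by
      have := EuclideanGeometry.vsub_orthogonalProjection_mem_direction_orthogonal sp (σ.points i)
      exact this
    have hvne : v ≠ 0 := by
      rw [hv, sub_ne_zero]
      intro hcon
      apply hpi
      rw [hcon]; exact hppmem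
    have hvnorm : (0 : ℝ) < ‖v‖ ^ 2 := pow_pos (norm_pos_iff.mpr hvne) 2
    -- inner product with differences in sp vanishes
    have horth : ∀ u : E', u ∈ sp.direction → ⟪v, u⟫ = 0 := by
      intro u hu
      rw [real_inner_comm]
      exact (Submodule.mem_orthogonal _ v).1 hvmem u hu
    have horth2 : ∀ y z : E', y ∈ sp → z ∈ sp → ⟪v, y - z⟫ = 0 := by
      intro y z hy hz
      have := AffineSubspace.vsub_mem_direction hy hz
      rw [vsub_eq_sub] at this
      exact horth _ this
    -- inner products with vertices
    have hptj : ∀ j : Fin (n + 2), ⟪v, σ.points j⟫ =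
        ⟪v, cF⟫ + if i = j then ‖v‖ ^ 2 else 0 := by
      intro j
      rcases eq_or_ne j i with rfl | hj
      · rw [if_pos rfl]
        have h1 : ⟪v, σ.points j - cF⟫ = ‖v‖ ^ 2 := by
          have : σ.points j - cF = v + (pp - cF) := by rw [hv]; abel
          rw [this, inner_add_right, horth2 pp cF hppmem hcFmem, add_zero,
            real_inner_self_eq_norm_sq]
        rw [inner_sub_right] at h1
        linarith
      · rw [if_neg (Ne.symm hj), add_zero]
        have h1 : ⟪v, σ.points j - cF⟫ = 0 := horth2 _ _ (hjmem j hj) hcFmem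
        rw [inner_sub_right] at h1
        linarith
    -- the key formula
    have hkey : ∀ y : E', ⟪v, y - cF⟫ = b.coord i y * ‖v‖ ^ 2 := by
      intro y
      have hsum := b.sum_coord_apply_eq_one y
      have hy := b.affineCombination_coord_eq_self y
      rw [hb] at hy
      set g : E' →ᵃ[ℝ] ℝ := ((innerSL ℝ v).toLinearMap).toAffineMap with hg
      have hgy : g y = ∑ j, b.coord j y * ⟪v, σ.points j⟫ := by
        conv_lhs => rw [← hy]
        rw [Finset.map_affineCombination _ _ _ hsum,
          Finset.affineCombination_eq_linear_combination _ _ _ hsum]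
        simp [hg, smul_eq_mul]
      have hgy2 : g y = ⟪v, y⟫ := rfl
      have hsplit : ∑ j, b.coord j y * ⟪v, σ.points j⟫ =
          ⟪v, cF⟫ + b.coord i y * ‖v‖ ^ 2 := by
        calc ∑ j, b.coord j y * ⟪v, σ.points j⟫
            = ∑ j, (b.coord j y * ⟪v, cF⟫ +
                if i = j then b.coord j y * ‖v‖ ^ 2 else 0) := by
              refine Finset.sum_congr rfl fun j _ => ?_
              rw [hptj j]
              rcases eq_or_ne i j with h | h <;> simp [h, mul_add]
          _ = ⟪v, cF⟫ + b.coord i y * ‖v‖ ^ 2 := by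
              rw [Finset.sum_add_distrib, ← Finset.sum_mul, hsum, one_mul,
                Finset.sum_ite_eq]
              simp
      rw [inner_sub_right, ← hgy2, hgy, hsplit]
      ring
    -- coordinate of circumcenter
    have hwci : b.coord i c = w i := by
      rw [hwc]
      exact b.coord_apply_combination_of_mem (Finset.mem_univ i) hw1
    -- projections and decomposition
    have hprojc : ↑(F.orthogonalProjectionSpan c) = cF := by
      rw [hF, hcF, hc]
      exact σ.orthogonalProjection_circumcenter hcard
    set px : E' := ↑(F.orthogonalProjectionSpan x) with hpx
    have hpxmem : px ∈ sp := (F.orthogonalProjectionSpan x).2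
    set svec : E' := x - px with hsvec
    set tvec : E' := c - cF with htvec
    set avec : E' := px - cF with havec
    have hsvmem : svec ∈ sp.directionᗮ := by
      have := EuclideanGeometry.vsub_orthogonalProjection_mem_direction_orthogonal sp x
      exact this
    have htvmem : tvec ∈ sp.directionᗮ := by
      have := EuclideanGeometry.vsub_orthogonalProjection_mem_direction_orthogonal sp c
      rw [vsub_eq_sub] at this
      rw [htvec, ← hprojc]
      exact this
    have havmem : avec ∈ sp.direction := by
      have := AffineSubspace.vsub_mem_direction hpxmem hcFmem
      rwa [vsub_eq_sub] at this
    -- direction orthogonal is one-dimensional, spanned by v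
    have hdim : Module.finrank ℝ sp.direction = n := by
      rw [hspdef, direction_affineSpan]
      exact F.independent.finrank_vectorSpan (by simp)
    have hdimo : Module.finrank ℝ sp.directionᗮ = 1 := by
      have h := Submodule.finrank_add_finrank_orthogonal (K := sp.direction)
      rw [hdim, finrank_euclideanSpace_fin] at h
      omega
    have hspanv : (ℝ ∙ v) = sp.directionᗮ := by
      apply Submodule.eq_of_le_of_finrank_eq
      · rwa [Submodule.span_singleton_le_iff_mem]
      · rw [finrank_span_singleton hvne, hdimo]
    obtain ⟨α, hα⟩ := Submodule.mem_span_singleton.1 (hspanv ▸ hsvmem)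
    obtain ⟨β, hβ⟩ := Submodule.mem_span_singleton.1 (hspanv ▸ htvmem)
    -- signs
    have hαval : α * ‖v‖ ^ 2 = b.coord i x * ‖v‖ ^ 2 := by
      have h1 : ⟪v, svec⟫ = b.coord i x * ‖v‖ ^ 2 := by
        have : svec = (x - cF) - avec := by rw [hsvec, havec]; abel
        rw [this, inner_sub_right, hkey x, horth _ havmem, sub_zero]
      have h2 : ⟪v, svec⟫ = α * ‖v‖ ^ 2 := by
        rw [← hα, real_inner_smul_right, real_inner_self_eq_norm_sq]
      linarith
    have hαneg : α < 0 := by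
      have := mul_right_cancel₀ (ne_of_gt hvnorm) hαval
      rw [this]; exact hi
    have hβval : β * ‖v‖ ^ 2 = w i * ‖v‖ ^ 2 := by
      have h1 : ⟪v, tvec⟫ = w i * ‖v‖ ^ 2 := by rw [htvec, hkey c, hwci]
      have h2 : ⟪v, tvec⟫ = β * ‖v‖ ^ 2 := by
        rw [← hβ, real_inner_smul_right, real_inner_self_eq_norm_sq]
      linarith
    have hβpos : 0 < β := by
      have := mul_right_cancel₀ (ne_of_gt hvnorm) hβval
      rw [this]; exact hw0 i
    have hst : ⟪svec, tvec⟫ ≤ 0 := by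
      rw [← hα, ← hβ, real_inner_smul_left, real_inner_smul_right,
        real_inner_self_eq_norm_sq]
      have : α * (β * ‖v‖ ^ 2) = (α * β) * ‖v‖ ^ 2 := by ring
      rw [this]
      exact mul_nonpos_of_nonpos_of_nonneg
        (mul_nonpos_of_nonpos_of_nonneg hαneg.le hβpos.le) (le_of_lt hvnorm)
    -- Pythagoras computations
    have has : ⟪avec, svec⟫ = 0 :=
      (Submodule.mem_orthogonal _ _).1 hsvmem avec havmem
    have hat : ⟪avec, tvec⟫ = 0 :=
      (Submodule.mem_orthogonal _ _).1 htvmem avec havmem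
    have e1 : x - cF = avec + svec := by rw [havec, hsvec]; abel
    have e2 : x - c = avec + (svec - tvec) := by rw [havec, hsvec, htvec]; abel
    have h2 : ‖x - cF‖ ^ 2 = ‖avec‖ ^ 2 + ‖svec‖ ^ 2 := by
      rw [e1, norm_add_sq_real, has]; ring
    have hstn : ‖svec - tvec‖ ^ 2 = ‖svec‖ ^ 2 - 2 * ⟪svec, tvec⟫ + ‖tvec‖ ^ 2 := by
      rw [norm_sub_sq_real]
    have h3 : ‖x - c‖ ^ 2 = ‖avec‖ ^ 2 + ‖svec‖ ^ 2 - 2 * ⟪svec, tvec⟫ + ‖tvec‖ ^ 2 := by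
      rw [e2, norm_add_sq_real, inner_sub_right, has, hat, hstn]
      ring
    -- circumradius relation
    have hqmem : F.points 0 ∈ sp := subset_affineSpan ℝ _ (Set.mem_range_self 0)
    have hq1 : dist (F.points 0) cF = F.circumradius := F.dist_circumcenter_eq_circumradius 0
    have hq2 : dist (F.points 0) c = σ.circumradius := by
      rw [hF, Affine.Simplex.face_points, hc]
      exact σ.dist_circumcenter_eq_circumradius _
    have hqt : ⟪F.points 0 - cF, tvec⟫ = 0 := by
      have hm : F.points 0 - cF ∈ sp.direction := by
        have := AffineSubspace.vsub_mem_direction hqmem hcFmem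
        rwa [vsub_eq_sub] at this
      exact (Submodule.mem_orthogonal _ _).1 htvmem _ hm
    have h4 : ‖F.points 0 - c‖ ^ 2 = ‖F.points 0 - cF‖ ^ 2 + ‖tvec‖ ^ 2 := by
      have e3 : F.points 0 - c = (F.points 0 - cF) - tvec := by rw [htvec]; abel
      rw [e3, norm_sub_sq_real, hqt]; ring
    have hR : σ.circumradius ^ 2 = F.circumradius ^ 2 + ‖tvec‖ ^ 2 := by
      rw [← hq2, ← hq1, dist_eq_norm, dist_eq_norm]; exact h4
    -- conclude
    have hxc : ‖x - c‖ ≤ σ.circumradius := by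
      rw [← dist_eq_norm]; exact Metric.mem_closedBall.1 hx
    have hxc2 : ‖x - c‖ ^ 2 ≤ σ.circumradius ^ 2 :=
      pow_le_pow_left₀ (norm_nonneg _) hxc 2
    have hfinal : ‖x - cF‖ ^ 2 ≤ F.circumradius ^ 2 := by
      linarith [h2, h3, hst, hR, hxc2]
    have hdone : dist x cF ≤ F.circumradius := by
      rw [dist_eq_norm]
      have h5 := Real.sqrt_le_sqrt hfinal
      rwa [Real.sqrt_sq (norm_nonneg _), Real.sqrt_sq F.circumradius_nonneg] at h5
    exact Metric.mem_closedBall.2 hdone
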